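/- Let A, C be disjoint nonempty subsets of [n] and S := [n] ∖ (A ∪ C). The critical cubes in the support of ρ_{A,C} are as follows: (1) if |A| ≥ 2, the support of ρ_{A,C} contains no critical cubes; (2) if A = {a} and |C| ≥ 2, the support contains no critical cubes unless a > c for all c ∈ C, in which case it contains the unique critical cube ({a}, ∅, C, S); (3) if A = {a}, C = {c} and c − a ≤ 1, the support contains the unique critical cube ({a}, ∅, {c}, S); (4) if A = {a}, C = {c} and c − a ≥ 2, the critical cubes in the support are exactly the cubes ({a}, T, {c}, S ∖ T) for those T ⊆ S with either T = ∅ or a < t < c for all t ∈ T. -/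

import Mathlib

/-- A (potential) cube of the cubical complex `Ω_n`: an ordered 4-tuple of finite
subsets of `ℕ`. -/
structure Cube where
  A : Finset ℕ
  B : Finset ℕ
  C : Finset ℕ
  D : Finset ℕ
deriving DecidableEq

/-- `σ` is a cube of `Ω_n`: the four parts are pairwise disjoint, their union is
`[n] = {1,…,n}`, and `A`, `C` are nonempty. -/
def IsCube (n : ℕ) (σ : Cube) : Prop :=
  Disjoint σ.A σ.B ∧ Disjoint σ.A σ.C ∧ Disjoint σ.A σ.D ∧
  Disjoint σ.B σ.C ∧ Disjoint σ.B σ.D ∧ Disjoint σ.C σ.D ∧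
  σ.A ∪ σ.B ∪ σ.C ∪ σ.D = Finset.Icc 1 n ∧
  σ.A.Nonempty ∧ σ.C.Nonempty

/-- The dimension of a cube, `|B| + |D|`. -/
def Cube.dim (σ : Cube) : ℕ := σ.B.card + σ.D.card

/-- The pivot `α(σ) = min (A ∪ B)`. -/
noncomputable def Cube.alpha (σ : Cube) : ℕ := sInf (↑(σ.A ∪ σ.B) : Set ℕ)

/-- The pivot `β(σ) = max (B ∪ C)`. -/
noncomputable def Cube.beta (σ : Cube) : ℕ := sSup (↑(σ.B ∪ σ.C) : Set ℕ)

def M1up (σ : Cube) : Prop := σ.alpha ∈ σ.B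
def M1down (σ : Cube) : Prop := σ.alpha ∈ σ.A ∧ 2 ≤ σ.A.card
def M2up (σ : Cube) : Prop := σ.A = {σ.alpha} ∧ σ.beta ∈ σ.B
def M2down (σ : Cube) : Prop :=
  σ.A = {σ.alpha} ∧ σ.beta ∈ σ.C ∧ 2 ≤ σ.C.card ∧ σ.alpha < σ.beta
def Mdown (σ : Cube) : Prop := M1down σ ∨ M2down σ
def Mup (σ : Cube) : Prop := M1up σ ∨ M2up σ
def Critical (σ : Cube) : Prop := ¬ Mdown σ ∧ ¬ Mup σ

/-- The covering relation: `τ` is obtained from `σ` by moving exactly one element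
of `B(σ) ∪ D(σ)` into `A(σ)` or into `C(σ)`. -/
def Covers (σ τ : Cube) : Prop :=
  (∃ x ∈ σ.B, τ = ⟨insert x σ.A, σ.B.erase x, σ.C, σ.D⟩) ∨
  (∃ x ∈ σ.B, τ = ⟨σ.A, σ.B.erase x, insert x σ.C, σ.D⟩) ∨
  (∃ x ∈ σ.D, τ = ⟨insert x σ.A, σ.B, σ.C, σ.D.erase x⟩) ∨
  (∃ x ∈ σ.D, τ = ⟨σ.A, σ.B, insert x σ.C, σ.D.erase x⟩)

open Classical in
/-- The matching `μ₊ : M↓ → M↑`. -/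
noncomputable def muPlus (σ : Cube) : Cube :=
  if M1down σ then ⟨σ.A.erase σ.alpha, insert σ.alpha σ.B, σ.C, σ.D⟩
  else ⟨σ.A, insert σ.beta σ.B, σ.C.erase σ.beta, σ.D⟩

/-- The free `ℤ/2`-vector space on all (potential) cubes. -/
abbrev Chain := Cube →₀ ZMod 2

/-- The chain `ρ_{A,C}`: the sum of all cubes `(A,B,C,D)` with
`B ∪ D = [n] ∖ (A ∪ C)`, `B ∩ D = ∅`. -/
noncomputable def rho (n : ℕ) (A C : Finset ℕ) : Chain :=
  (Finset.Icc 1 n \ (A ∪ C)).powerset.sum fun B =>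
    Finsupp.single ⟨A, B, C, (Finset.Icc 1 n \ (A ∪ C)) \ B⟩ 1

lemma Cube.alpha_mem (σ : Cube) (h : (σ.A ∪ σ.B).Nonempty) : σ.alpha ∈ σ.A ∪ σ.B := by
  rw [Cube.alpha, h.csInf_eq_min']; exact Finset.min'_mem _ h

lemma Cube.alpha_le (σ : Cube) (h : (σ.A ∪ σ.B).Nonempty) {x : ℕ}
    (hx : x ∈ σ.A ∪ σ.B) : σ.alpha ≤ x := by
  rw [Cube.alpha, h.csInf_eq_min']; exact Finset.min'_le _ _ hx

lemma Cube.beta_mem (σ : Cube) (h : (σ.B ∪ σ.C).Nonempty) : σ.beta ∈ σ.B ∪ σ.C := by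
  rw [Cube.beta, h.csSup_eq_max']; exact Finset.max'_mem _ h

lemma Cube.le_beta (σ : Cube) (h : (σ.B ∪ σ.C).Nonempty) {x : ℕ}
    (hx : x ∈ σ.B ∪ σ.C) : x ≤ σ.beta := by
  rw [Cube.beta, h.csSup_eq_max']; exact Finset.le_max' _ _ hx

lemma critical_iff (σ : Cube) (hAB : Disjoint σ.A σ.B) (hBC : Disjoint σ.B σ.C)
    (hAne : σ.A.Nonempty) (hCne : σ.C.Nonempty) :
    Critical σ ↔ σ.alpha ∈ σ.A ∧ σ.A.card ≤ 1 ∧ σ.beta ∈ σ.C ∧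
      (σ.C.card ≤ 1 ∨ σ.beta ≤ σ.alpha) := by
  have hABne : (σ.A ∪ σ.B).Nonempty := hAne.mono Finset.subset_union_left
  have hBCne : (σ.B ∪ σ.C).Nonempty := hCne.mono Finset.subset_union_right
  constructor
  · rintro ⟨hd, hu⟩
    have hαB : σ.alpha ∉ σ.B := fun h => hu (Or.inl h)
    have hαA : σ.alpha ∈ σ.A := by
      rcases Finset.mem_union.mp (σ.alpha_mem hABne) with h | h
      · exact h
      · exact absurd h hαB
    have hcard : σ.A.card ≤ 1 := by
      by_contra h
      exact hd (Or.inl ⟨hαA, by omega⟩)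
    have hAeq : σ.A = {σ.alpha} :=
      Finset.eq_singleton_iff_unique_mem.mpr
        ⟨hαA, fun x hx => Finset.card_le_one.mp hcard x hx _ hαA⟩
    have hβB : σ.beta ∉ σ.B := fun h => hu (Or.inr ⟨hAeq, h⟩)
    have hβC : σ.beta ∈ σ.C := by
      rcases Finset.mem_union.mp (σ.beta_mem hBCne) with h | h
      · exact absurd h hβB
      · exact h
    refine ⟨hαA, hcard, hβC, ?_⟩
    by_contra h
    push_neg at h
    exact hd (Or.inr ⟨hAeq, hβC, by omega, by omega⟩)
  · rintro ⟨h1, h2, h3, h4⟩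
    have hAeq : σ.A = {σ.alpha} :=
      Finset.eq_singleton_iff_unique_mem.mpr
        ⟨h1, fun x hx => Finset.card_le_one.mp h2 x hx _ h1⟩
    constructor
    · rintro (⟨_, hc⟩ | ⟨_, _, hc2, hlt⟩)
      · omega
      · rcases h4 with h4 | h4 <;> omega
    · rintro (hB | ⟨_, hB⟩)
      · exact Finset.disjoint_left.mp hAB h1 hB
      · exact Finset.disjoint_left.mp hBC hB h3

lemma mem_support_rho (n : ℕ) (A C : Finset ℕ) (σ : Cube) :
    σ ∈ (rho n A C).support ↔
      ∃ B ⊆ Finset.Icc 1 n \ (A ∪ C),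
        σ = ⟨A, B, C, (Finset.Icc 1 n \ (A ∪ C)) \ B⟩ := by
  classical
  rw [rho, Finsupp.support_sum_eq_biUnion]
  · simp only [Finset.mem_biUnion, Finset.mem_powerset,
      Finsupp.support_single_ne_zero _ (one_ne_zero), Finset.mem_singleton]
  · intro i j hij
    simp only [Finsupp.support_single_ne_zero _ (one_ne_zero),
      Finset.disjoint_singleton]
    intro h
    exact hij (congrArg Cube.B h)

lemma crit_singletons (a c : ℕ) (B D : Finset ℕ) (haB : a ∉ B) (hcB : c ∉ B)
    (hac : a ≠ c) :
    Critical ⟨{a}, B, {c}, D⟩ ↔ ∀ t ∈ B, a < t ∧ t < c := by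
  rw [critical_iff _ (by simpa using haB) (by simpa using hcB)
    (Finset.singleton_nonempty a) (Finset.singleton_nonempty c)]
  have hABne : (({a} : Finset ℕ) ∪ B).Nonempty :=
    (Finset.singleton_nonempty a).mono Finset.subset_union_left
  have hBCne : (B ∪ ({c} : Finset ℕ)).Nonempty :=
    (Finset.singleton_nonempty c).mono Finset.subset_union_right
  set σ : Cube := ⟨{a}, B, {c}, D⟩ with hσ
  constructor
  · rintro ⟨hα, -, hβ, -⟩
    have hα' : σ.alpha = a := Finset.mem_singleton.mp hα
    have hβ' : σ.beta = c := Finset.mem_singleton.mp hβ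
    intro t ht
    have h1 : σ.alpha ≤ t := σ.alpha_le hABne (Finset.mem_union_right _ ht)
    have h2 : t ≤ σ.beta := σ.le_beta hBCne (Finset.mem_union_left _ ht)
    constructor
    · rcases Nat.lt_or_ge a t with h | h
      · exact h
      · have : a = t := by omega
        exact absurd (this ▸ ht) haB
    · rcases Nat.lt_or_ge t c with h | h
      · exact h
      · have : t = c := by omega
        exact absurd (this ▸ ht) hcB
  · intro hB
    have hα : σ.alpha = a := by
      have hm := σ.alpha_mem hABne
      have hle : σ.alpha ≤ a :=
        σ.alpha_le hABne (Finset.mem_union_left _ (Finset.mem_singleton_self a))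
      rcases Finset.mem_union.mp hm with h | h
      · exact Finset.mem_singleton.mp h
      · exact absurd hle (by have := (hB _ h).1; omega)
    have hβ : σ.beta = c := by
      have hm := σ.beta_mem hBCne
      have hle : c ≤ σ.beta :=
        σ.le_beta hBCne (Finset.mem_union_right _ (Finset.mem_singleton_self c))
      rcases Finset.mem_union.mp hm with h | h
      · exact absurd hle (by have := (hB _ h).2; omega)
      · exact Finset.mem_singleton.mp h
    exact ⟨by rw [hα]; simp [hσ], by simp [hσ], by rw [hβ]; simp [hσ], by simp [hσ]⟩

/-- Description of the critical cubes in the support of `ρ_{A,C}`, where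
`S = [n] ∖ (A ∪ C)`:
(1) if `|A| ≥ 2` there are none;
(2) if `A = {a}` and `|C| ≥ 2`, there are none unless `a > C`, in which case
    `(a, ∅, C, S)` is the unique one;
(3) if `A = {a}`, `C = {c}` and `c − a ≤ 1`, `(a, ∅, {c}, S)` is the unique one;
(4) if `A = {a}`, `C = {c}` and `c − a ≥ 2`, they are exactly the cubes
    `(a, T, {c}, S ∖ T)` with `T ⊆ S` and either `T = ∅` or `a < T < c`. -/
theorem rho_critical_support (n : ℕ) (hn : 2 ≤ n) (A C : Finset ℕ)
    (hA : A ⊆ Finset.Icc 1 n) (hC : C ⊆ Finset.Icc 1 n)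
    (hdisj : Disjoint A C) (hAne : A.Nonempty) (hCne : C.Nonempty) :
    (2 ≤ A.card → ∀ σ ∈ (rho n A C).support, ¬ Critical σ) ∧
    (∀ a : ℕ, A = {a} → 2 ≤ C.card →
      ((¬ ∀ c ∈ C, c < a) → ∀ σ ∈ (rho n A C).support, ¬ Critical σ) ∧
      ((∀ c ∈ C, c < a) → ∀ σ : Cube,
        (σ ∈ (rho n A C).support ∧ Critical σ) ↔
          σ = ⟨{a}, ∅, C, Finset.Icc 1 n \ (A ∪ C)⟩)) ∧
    (∀ a c : ℕ, A = {a} → C = {c} → (c : ℤ) - (a : ℤ) ≤ 1 → ∀ σ : Cube,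
      (σ ∈ (rho n A C).support ∧ Critical σ) ↔
        σ = ⟨{a}, ∅, {c}, Finset.Icc 1 n \ (A ∪ C)⟩) ∧
    (∀ a c : ℕ, A = {a} → C = {c} → 2 ≤ (c : ℤ) - (a : ℤ) → ∀ σ : Cube,
      (σ ∈ (rho n A C).support ∧ Critical σ) ↔
        ∃ T ⊆ Finset.Icc 1 n \ (A ∪ C),
          (T = ∅ ∨ ∀ t ∈ T, a < t ∧ t < c) ∧
          σ = ⟨{a}, T, {c}, (Finset.Icc 1 n \ (A ∪ C)) \ T⟩) := by
  classical
  set S := Finset.Icc 1 n \ (A ∪ C) with hS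
  have hSA : ∀ {B : Finset ℕ}, B ⊆ S → Disjoint A B := by
    intro B hB
    refine Finset.disjoint_left.mpr fun x hxA hxB => ?_
    have hx := hB hxB
    rw [hS, Finset.mem_sdiff] at hx
    exact hx.2 (Finset.mem_union_left _ hxA)
  have hSC : ∀ {B : Finset ℕ}, B ⊆ S → Disjoint B C := by
    intro B hB
    refine Finset.disjoint_left.mpr fun x hxB hxC => ?_
    have hx := hB hxB
    rw [hS, Finset.mem_sdiff] at hx
    exact hx.2 (Finset.mem_union_right _ hxC)
  refine ⟨?_, ?_, ?_, ?_⟩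
  · -- Part 1
    intro h2 σ hσ hcrit
    obtain ⟨B, hBS, rfl⟩ := (mem_support_rho n A C σ).mp hσ
    have hc : A.card ≤ 1 :=
      ((critical_iff _ (hSA hBS) (hSC hBS) hAne hCne).mp hcrit).2.1
    omega
  · -- Part 2
    rintro a rfl hC2
    constructor
    · intro hnot σ hσ hcrit
      obtain ⟨B, hBS, rfl⟩ := (mem_support_rho n _ C σ).mp hσ
      obtain ⟨hα, -, hβ, h4⟩ :=
        (critical_iff _ (hSA hBS) (hSC hBS) hAne hCne).mp hcrit
      set σ' : Cube := ⟨{a}, B, C, S \ B⟩ with hσ'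
      apply hnot
      intro c hc
      have hα' : σ'.alpha = a := Finset.mem_singleton.mp hα
      have hCc : σ'.C.card = C.card := rfl
      have hβa : σ'.beta ≤ a := by
        rcases h4 with h4 | h4
        · omega
        · omega
      have hcβ : c ≤ σ'.beta :=
        σ'.le_beta (hCne.mono Finset.subset_union_right) (Finset.mem_union_right _ hc)
      have hca : c ≠ a := fun h =>
        Finset.disjoint_right.mp hdisj hc (h ▸ Finset.mem_singleton_self a)
      omega
    · intro hlt σ
      constructor
      · rintro ⟨hσ, hcrit⟩
        obtain ⟨B, hBS, rfl⟩ := (mem_support_rho n _ C σ).mp hσ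
        obtain ⟨hα, -, hβ, h4⟩ :=
          (critical_iff _ (hSA hBS) (hSC hBS) hAne hCne).mp hcrit
        set σ' : Cube := ⟨{a}, B, C, S \ B⟩ with hσ'
        have hα' : σ'.alpha = a := Finset.mem_singleton.mp hα
        have hCc : σ'.C.card = C.card := rfl
        have hβa : σ'.beta ≤ a := by
          rcases h4 with h4 | h4
          · omega
          · omega
        have hBempty : B = ∅ := by
          rw [Finset.eq_empty_iff_forall_notMem]
          intro b hb
          have h1 : σ'.alpha ≤ b :=
            σ'.alpha_le (hAne.mono Finset.subset_union_left) (Finset.mem_union_right _ hb)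
          have h2 : b ≤ σ'.beta :=
            σ'.le_beta (hCne.mono Finset.subset_union_right) (Finset.mem_union_left _ hb)
          have hab : a ≠ b := fun h =>
            Finset.disjoint_left.mp (hSA hBS) (Finset.mem_singleton_self a) (h ▸ hb)
          omega
        subst hBempty
        rw [hσ', Finset.sdiff_empty]
      · rintro rfl
        refine ⟨(mem_support_rho n _ C _).mpr
          ⟨∅, Finset.empty_subset _, by rw [Finset.sdiff_empty]⟩, ?_⟩
        rw [critical_iff _ (hSA (Finset.empty_subset _)) (hSC (Finset.empty_subset _))
          hAne hCne]
        set σ' : Cube := ⟨{a}, (∅ : Finset ℕ), C, S⟩ with hσ'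
        have hα : σ'.alpha = a := by
          have h := σ'.alpha_mem (hAne.mono Finset.subset_union_left)
          simpa [hσ'] using h
        have hβ : σ'.beta ∈ C := by
          have h := σ'.beta_mem (hCne.mono Finset.subset_union_right)
          simpa [hσ'] using h
        refine ⟨by rw [hα]; simp [hσ'], by simp [hσ'], hβ, Or.inr ?_⟩
        have := hlt _ hβ
        omega
  · -- Part 3
    rintro a c rfl rfl hca σ
    have hac : a ≠ c := fun h =>
      Finset.disjoint_left.mp hdisj (Finset.mem_singleton_self a) (by simp [h])
    have haS : ∀ {B : Finset ℕ}, B ⊆ S → a ∉ B := fun hB hmem =>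
      Finset.disjoint_left.mp (hSA hB) (Finset.mem_singleton_self a) hmem
    have hcS : ∀ {B : Finset ℕ}, B ⊆ S → c ∉ B := fun hB hmem =>
      Finset.disjoint_right.mp (hSC hB) (Finset.mem_singleton_self c) hmem
    constructor
    · rintro ⟨hσ, hcrit⟩
      obtain ⟨B, hBS, rfl⟩ := (mem_support_rho n _ _ σ).mp hσ
      have hB := (crit_singletons a c B _ (haS hBS) (hcS hBS) hac).mp hcrit
      have hBempty : B = ∅ := by
        rw [Finset.eq_empty_iff_forall_notMem]
        intro t ht
        have := hB t ht
        omega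
      subst hBempty
      rw [Finset.sdiff_empty]
    · rintro rfl
      refine ⟨(mem_support_rho n _ _ _).mpr
        ⟨∅, Finset.empty_subset _, by rw [Finset.sdiff_empty]⟩, ?_⟩
      exact (crit_singletons a c ∅ _ (by simp) (by simp) hac).mpr (by simp)
  · -- Part 4
    rintro a c rfl rfl hca σ
    have hac : a ≠ c := fun h =>
      Finset.disjoint_left.mp hdisj (Finset.mem_singleton_self a) (by simp [h])
    have haS : ∀ {B : Finset ℕ}, B ⊆ S → a ∉ B := fun hB hmem =>
      Finset.disjoint_left.mp (hSA hB) (Finset.mem_singleton_self a) hmem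
    have hcS : ∀ {B : Finset ℕ}, B ⊆ S → c ∉ B := fun hB hmem =>
      Finset.disjoint_right.mp (hSC hB) (Finset.mem_singleton_self c) hmem
    constructor
    · rintro ⟨hσ, hcrit⟩
      obtain ⟨B, hBS, rfl⟩ := (mem_support_rho n _ _ σ).mp hσ
      exact ⟨B, hBS,
        Or.inr ((crit_singletons a c B _ (haS hBS) (hcS hBS) hac).mp hcrit), rfl⟩
    · rintro ⟨T, hTS, hcond, rfl⟩
      refine ⟨(mem_support_rho n _ _ _).mpr ⟨T, hTS, rfl⟩, ?_⟩
      refine (crit_singletons a c T _ (haS hTS) (hcS hTS) hac).mpr ?_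
      intro t ht
      rcases hcond with rfl | h
      · simp at ht
      · exact h t ht
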